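/- Let A → B be a faithfully flat ring map and M an A-module such that M ⊗_A B is a finite projective B-module. If M is finitely presented over A, then M is finite projective over A. -/

import Mathlib

open TensorProduct

set_option maxHeartbeats 1000000
set_option synthInstance.maxHeartbeats 200000

/-- Faithfully flat descent of flatness. -/
lemma flat_descent_aux (A B : Type*) [CommRing A] [CommRing B] [Algebra A B]
    [Module.FaithfullyFlat A B]
    (M : Type*) [AddCommGroup M] [Module A M]
    [Module.Flat B (B ⊗[A] M)] : Module.Flat A M := by
  rw [Module.Flat.iff_rTensor_injective']
  intro I
  set f := LinearMap.rTensor M I.subtype with hf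
  -- base-changed inclusion of the ideal
  have hj : Function.Injective (I.subtype.baseChange B) := by
    have : Function.Injective (LinearMap.lTensor B I.subtype) :=
      Module.Flat.lTensor_preserves_injective_linearMap I.subtype Subtype.val_injective
    intro x y hxy
    apply this
    simpa [← LinearMap.baseChange_eq_ltensor] using hxy
  -- the nice injective map over B
  set k := LinearMap.rTensor (B ⊗[A] M) (I.subtype.baseChange B) with hk
  have hkinj : Function.Injective k :=
    Module.Flat.rTensor_preserves_injective_linearMap _ hj
  -- the identifications
  set e1 : B ⊗[A] (↥I ⊗[A] M) ≃ₗ[A] (B ⊗[A] ↥I) ⊗[A] M :=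
    (TensorProduct.assoc A B ↥I M).symm with he1
  set eI : (B ⊗[A] ↥I) ⊗[A] M ≃ₗ[B] (B ⊗[A] ↥I) ⊗[B] (B ⊗[A] M) :=
    (TensorProduct.AlgebraTensorModule.cancelBaseChange A B B (B ⊗[A] ↥I) M).symm with heI
  set e2a : B ⊗[A] (A ⊗[A] M) ≃ₗ[A] (B ⊗[A] A) ⊗[A] M :=
    (TensorProduct.assoc A B A M).symm with he2a
  set e2b : (B ⊗[A] A) ⊗[A] M ≃ₗ[B] (B ⊗[A] A) ⊗[B] (B ⊗[A] M) :=
    (TensorProduct.AlgebraTensorModule.cancelBaseChange A B B (B ⊗[A] A) M).symm with he2b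
  have key : ∀ x : B ⊗[A] (↥I ⊗[A] M),
      k (eI (e1 x)) = e2b (e2a (LinearMap.lTensor B f x)) := by
    intro x
    induction x using TensorProduct.induction_on with
    | zero => simp only [map_zero]
    | tmul b y =>
      induction y using TensorProduct.induction_on with
      | zero => simp only [tmul_zero, map_zero]
      | tmul i m =>
        simp [he1, heI, he2a, he2b, hk, hf,
          TensorProduct.AlgebraTensorModule.cancelBaseChange_symm_tmul]
      | add y1 y2 h1 h2 =>
        simp only [tmul_add, map_add] at h1 h2 ⊢
        rw [h1, h2]
    | add x1 x2 h1 h2 =>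
      simp only [map_add] at h1 h2 ⊢
      rw [h1, h2]
  -- injectivity of the base-changed map
  have hBf : Function.Injective (LinearMap.lTensor B f) := by
    intro x y hxy
    have h1 : k (eI (e1 x)) = k (eI (e1 y)) := by
      rw [key x, key y, hxy]
    have h2 := hkinj h1
    have h3 := eI.injective h2
    exact e1.injective h3
  -- descend injectivity using faithful flatness
  have hker : ∀ x, f x = 0 → x = 0 := by
    intro x hx
    set l := LinearMap.toSpanSingleton A (↥I ⊗[A] M) x with hl
    have hcomp : LinearMap.lTensor B (f.comp l) = 0 := by
      have : f.comp l = 0 := by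
        ext a
        simp [hl, LinearMap.toSpanSingleton_apply, map_smul, hx]
      rw [this, LinearMap.lTensor_zero]
    have hzero : LinearMap.lTensor B l = 0 := by
      apply TensorProduct.ext'
      intro b y
      have h0 : LinearMap.lTensor B f (LinearMap.lTensor B l
          (b ⊗ₜ y)) = 0 := by
        rw [← LinearMap.lTensor_comp_apply, hcomp]
        rfl
      have h1 : LinearMap.lTensor B f (LinearMap.lTensor B l
          (b ⊗ₜ y)) = LinearMap.lTensor B f 0 :=
        h0.trans (map_zero _).symm
      simpa using hBf h1
    have hsub : l = 0 := by
      rw [Module.FaithfullyFlat.zero_iff_lTensor_zero A B l]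
      exact hzero
    have : x = l 1 := by simp [hl]
    rw [hsub] at this
    simpa using this
  intro x y hxy
  have : f (x - y) = 0 := by rw [map_sub, hxy, sub_self]
  have := hker _ this
  exact sub_eq_zero.mp this

/-- Faithfully flat descent of finite projectivity: if `A → B` is faithfully
flat, `M` is a finitely presented `A`-module and `M ⊗_A B` is a finite
projective `B`-module, then `M` is finite projective over `A`. -/
theorem stmt13 (A B : Type*) [CommRing A] [CommRing B] [Algebra A B]
    [Module.FaithfullyFlat A B]
    (M : Type*) [AddCommGroup M] [Module A M]
    (hfp : Module.FinitePresentation A M)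
    (hfin : Module.Finite B (TensorProduct A B M))
    (hproj : Module.Projective B (TensorProduct A B M)) :
    Module.Finite A M ∧ Module.Projective A M := by
  letI := hfp
  haveI : Module.Flat B (B ⊗[A] M) := Module.Flat.of_projective
  haveI hflat : Module.Flat A M := flat_descent_aux A B M
  refine ⟨inferInstance, ?_⟩
  apply Module.projective_of_localization_maximal
  intro P hP
  haveI : Module.Flat (Localization.AtPrime P) (LocalizedModule P.primeCompl M) :=
    inferInstance
  haveI := Module.free_of_flat_of_isLocalRing
    (R := Localization.AtPrime P) (P := LocalizedModule P.primeCompl M)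
  infer_instance
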